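/- arXiv:2308.02018 — 3 statements merged into one kernel-verified Lean document; each statement's English description precedes it below -/
import Mathlib

section
/- Properties of the interior operator: for all gradual sensitivities g₁ = [s₁,s₂] and g₂ = [s₃,s₄] (so s₁ ≤ s₂ and s₃ ≤ s₄), the interior I(g₁,g₂) is defined if and only if g₁ ⪅ g₂ (i.e., s₁ ≤ s₄); and when defined, writing I(g₁,g₂) = ⟨g₁', g₂'⟩, both g₁' and g₂' are valid intervals (lower bound at most upper bound), g₁' ⊑ g₁, g₂' ⊑ g₂, and g₁' ⪅ g₂'. -/
/-- A gradual sensitivity: an interval `[lo, hi]` over the extended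
nonnegative reals `[0,∞]`. -/
structure Itv where
  lo : ENNReal
  hi : ENNReal

/-- A gradual sensitivity `[s₁,s₂]` is a valid interval when `s₁ ≤ s₂`. -/
def Itv.Valid (g : Itv) : Prop := g.lo ≤ g.hi

/-- Consistent sensitivity ordering: `[s₁,s₂] ⪅ [s₃,s₄]` iff `s₁ ≤ s₄`. -/
def Itv.cle (g₁ g₂ : Itv) : Prop := g₁.lo ≤ g₂.hi

/-- Precision (interval inclusion): `[s₁,s₂] ⊑ [s₃,s₄]` iff `s₃ ≤ s₁` and `s₂ ≤ s₄`. -/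
def Itv.prec (g₁ g₂ : Itv) : Prop := g₂.lo ≤ g₁.lo ∧ g₁.hi ≤ g₂.hi

/-- The unknown sensitivity `? = [0,∞]`. -/
noncomputable def Itv.unknown : Itv := ⟨0, ⊤⟩

open Classical in
/-- The interiorOp operator: I([s₁,s₂],[s₃,s₄]) = ⟨[s₁, s₂⊓s₄], [s₁⊔s₃, s₄]⟩,
defined when s₁ ≤ s₂⊓s₄ and s₁⊔s₃ ≤ s₄, undefined otherwise. -/
noncomputable def interiorOp (g₁ g₂ : Itv) : Option (Itv × Itv) :=
  if g₁.lo ≤ g₁.hi ⊓ g₂.hi ∧ g₁.lo ⊔ g₂.lo ≤ g₂.hi then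
    some (⟨g₁.lo, g₁.hi ⊓ g₂.hi⟩, ⟨g₁.lo ⊔ g₂.lo, g₂.hi⟩)
  else none

/-- Properties of the interiorOp operator: for valid intervals [s₁,s₂] and [s₃,s₄],
the interiorOp is defined iff [s₁,s₂] ⪅ [s₃,s₄]; and when defined, both components
are valid intervals, componentwise more precise than the inputs, and consistently
ordered. -/
theorem interior_props (s₁ s₂ s₃ s₄ : ENNReal) (h₁ : s₁ ≤ s₂) (h₂ : s₃ ≤ s₄) :
    ((interiorOp ⟨s₁, s₂⟩ ⟨s₃, s₄⟩).isSome ↔ Itv.cle ⟨s₁, s₂⟩ ⟨s₃, s₄⟩) ∧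
    (∀ g₁' g₂' : Itv, interiorOp ⟨s₁, s₂⟩ ⟨s₃, s₄⟩ = some (g₁', g₂') →
      g₁'.Valid ∧ g₂'.Valid ∧ g₁'.prec ⟨s₁, s₂⟩ ∧ g₂'.prec ⟨s₃, s₄⟩ ∧ g₁'.cle g₂') := by
  constructor
  · simp only [interiorOp, Itv.cle]
    split
    · rename_i hc
      simp only [Option.isSome_some, true_iff]
      exact le_trans hc.1 (min_le_right _ _)
    · rename_i hc
      simp only [Option.isSome_none, Bool.false_eq_true, false_iff]
      intro h
      exact hc ⟨le_min h₁ h, sup_le h h₂⟩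
  · intro g₁' g₂' heq
    simp only [interiorOp] at heq
    split at heq
    · rename_i hc
      obtain ⟨hc1, hc2⟩ := hc
      injection heq with heq
      obtain ⟨h3, h4⟩ := Prod.mk.inj heq
      subst h3; subst h4
      refine ⟨hc1, hc2, ⟨le_refl _, min_le_left _ _⟩, ⟨le_sup_right, le_refl _⟩, ?_⟩
      exact le_trans hc1 (min_le_right _ _)
    · exact absurd heq (by simp)
end

section
/- Soundness of consistent transitivity: let g₁, g₂, g₃ be gradual sensitivities with g₁ ⪅ g₂ and g₂ ⪅ g₃, and let ε₁, ε₂ be evidences (pairs of valid intervals) with ε₁ ⊑² I(g₁,g₂) and ε₂ ⊑² I(g₂,g₃). If the consistent transitivity ε₁ ∘ ε₂ is defined, then g₁ ⪅ g₃ holds (so I(g₁,g₃) is defined) and ε₁ ∘ ε₂ ⊑² I(g₁,g₃); that is, the combined evidence justifies the transitive consistent ordering judgment. -/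
open Classical in
/-- The consistent transitivity operator on evidences:
⟨[s₁₁,s₁₂],[s₁₃,s₁₄]⟩ ∘ ⟨[s₂₁,s₂₂],[s₂₃,s₂₄]⟩ =
⟨[s₁₁, s₁₂⊓s₁₄⊓s₂₂], [s₁₃⊔s₂₁⊔s₂₃, s₂₄]⟩,
defined when s₁₁ ≤ s₁₂⊓s₁₄⊓s₂₂ and s₁₃⊔s₂₁⊔s₂₃ ≤ s₂₄, undefined otherwise. -/
noncomputable def ctrans (ε₁ ε₂ : Itv × Itv) : Option (Itv × Itv) :=
  if ε₁.1.lo ≤ ε₁.1.hi ⊓ ε₁.2.hi ⊓ ε₂.1.hi ∧ ε₁.2.lo ⊔ ε₂.1.lo ⊔ ε₂.2.lo ≤ ε₂.2.hi then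
    some (⟨ε₁.1.lo, ε₁.1.hi ⊓ ε₁.2.hi ⊓ ε₂.1.hi⟩, ⟨ε₁.2.lo ⊔ ε₂.1.lo ⊔ ε₂.2.lo, ε₂.2.hi⟩)
  else none

/-- Evidence precision ⊑² (componentwise precision). -/
def evPrec (ε ε' : Itv × Itv) : Prop := ε.1.prec ε'.1 ∧ ε.2.prec ε'.2

/-- An evidence is a pair of valid intervals. -/
def evValid (ε : Itv × Itv) : Prop := ε.1.Valid ∧ ε.2.Valid

/-- Soundness of consistent transitivity: if ε₁ justifies g₁ ⪅ g₂ and ε₂ justifies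
g₂ ⪅ g₃ (each at least as precise as the corresponding interiorOp), and ε₁ ∘ ε₂ is
defined, then g₁ ⪅ g₃ (so I(g₁,g₃) is defined) and ε₁ ∘ ε₂ ⊑² I(g₁,g₃). -/
theorem ctrans_sound (g₁ g₂ g₃ : Itv)
    (hg₁ : g₁.Valid) (hg₂ : g₂.Valid) (hg₃ : g₃.Valid)
    (h₁₂ : g₁.cle g₂) (h₂₃ : g₂.cle g₃)
    (ε₁ ε₂ : Itv × Itv) (hv₁ : evValid ε₁) (hv₂ : evValid ε₂)
    (ι₁₂ ι₂₃ : Itv × Itv)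
    (hi₁ : interiorOp g₁ g₂ = some ι₁₂) (hp₁ : evPrec ε₁ ι₁₂)
    (hi₂ : interiorOp g₂ g₃ = some ι₂₃) (hp₂ : evPrec ε₂ ι₂₃)
    (ε : Itv × Itv) (hc : ctrans ε₁ ε₂ = some ε) :
    g₁.cle g₃ ∧ ∃ ι₁₃, interiorOp g₁ g₃ = some ι₁₃ ∧ evPrec ε ι₁₃ := by
  simp only [interiorOp] at hi₁ hi₂
  split at hi₁
  case isFalse => exact absurd hi₁ (by simp)
  split at hi₂
  case isFalse => exact absurd hi₂ (by simp)
  simp only [ctrans] at hc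
  split at hc
  case isFalse => exact absurd hc (by simp)
  rename_i hd1 hd2 hd3
  obtain ⟨hc1, hc2⟩ := hd3
  cases hc
  obtain ⟨rfl⟩ := hi₁
  obtain ⟨rfl⟩ := hi₂
  obtain ⟨⟨a1,a2⟩,⟨a3,a4⟩⟩ := hp₁
  obtain ⟨⟨b1,b2⟩,⟨b3,b4⟩⟩ := hp₂
  have h13 : g₁.lo ≤ g₃.hi := by
    calc g₁.lo ≤ ε₁.1.lo := a1
    _ ≤ ε₂.1.hi := le_trans hc1 inf_le_right
    _ ≤ g₂.hi ⊓ g₃.hi := b2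
    _ ≤ g₃.hi := inf_le_right
  refine ⟨h13, (⟨g₁.lo, g₁.hi ⊓ g₃.hi⟩, ⟨g₁.lo ⊔ g₃.lo, g₃.hi⟩), ?_, ?_, ?_, ?_⟩
  · simp only [interiorOp, if_pos (⟨le_inf hg₁ h13, sup_le h13 hg₃⟩ :
      g₁.lo ≤ g₁.hi ⊓ g₃.hi ∧ g₁.lo ⊔ g₃.lo ≤ g₃.hi)]
  · exact ⟨a1, le_inf (le_trans (le_trans inf_le_left inf_le_left)
      (le_trans a2 inf_le_left)) (le_trans inf_le_right (le_trans b2 inf_le_right))⟩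
  · exact sup_le (le_trans (le_sup_left.trans a3) (le_sup_left.trans le_sup_left))
      (le_trans (le_sup_right.trans b3) le_sup_right)
  · exact b4
end

section
/- Monotonicity of consistent transitivity with respect to precision: let ε₁, ε₁', ε₂, ε₂' be evidences whose components are valid intervals, with ε₁ ⊑² ε₁' and ε₂ ⊑² ε₂'. If ε₁ ∘ ε₂ is defined, then ε₁' ∘ ε₂' is defined and ε₁ ∘ ε₂ ⊑² ε₁' ∘ ε₂'. -/
/-- Monotonicity of consistent transitivity with respect to precision:
if ε₁ ⊑² ε₁', ε₂ ⊑² ε₂' and ε₁ ∘ ε₂ is defined, then ε₁' ∘ ε₂' is defined and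
ε₁ ∘ ε₂ ⊑² ε₁' ∘ ε₂'. -/
theorem ctrans_monotone (ε₁ ε₁' ε₂ ε₂' : Itv × Itv)
    (hv₁ : evValid ε₁) (hv₁' : evValid ε₁') (hv₂ : evValid ε₂) (hv₂' : evValid ε₂')
    (hp₁ : evPrec ε₁ ε₁') (hp₂ : evPrec ε₂ ε₂')
    (ε : Itv × Itv) (hc : ctrans ε₁ ε₂ = some ε) :
    ∃ ε', ctrans ε₁' ε₂' = some ε' ∧ evPrec ε ε' := by
  unfold ctrans at hc ⊢
  split at hc
  case isFalse => exact absurd hc (by simp)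
  case isTrue h =>
    obtain ⟨h1, h2⟩ := h
    obtain ⟨⟨a1, a2⟩, ⟨a3, a4⟩⟩ := hp₁
    obtain ⟨⟨b1, b2⟩, ⟨b3, b4⟩⟩ := hp₂
    have hminle : ε₁.1.hi ⊓ ε₁.2.hi ⊓ ε₂.1.hi ≤ ε₁'.1.hi ⊓ ε₁'.2.hi ⊓ ε₂'.1.hi := by
      exact inf_le_inf (inf_le_inf a2 a4) b2
    have hmaxle : ε₁'.2.lo ⊔ ε₂'.1.lo ⊔ ε₂'.2.lo ≤ ε₁.2.lo ⊔ ε₂.1.lo ⊔ ε₂.2.lo := by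
      exact sup_le_sup (sup_le_sup a3 b1) b3
    have hcond : ε₁'.1.lo ≤ ε₁'.1.hi ⊓ ε₁'.2.hi ⊓ ε₂'.1.hi ∧
        ε₁'.2.lo ⊔ ε₂'.1.lo ⊔ ε₂'.2.lo ≤ ε₂'.2.hi :=
      ⟨a1.trans (h1.trans hminle), hmaxle.trans (h2.trans b4)⟩
    rw [if_pos hcond]
    refine ⟨_, rfl, ?_⟩
    simp only [Option.some.injEq] at hc
    subst hc
    exact ⟨⟨a1, hminle⟩, ⟨hmaxle, b4⟩⟩
end
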